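/- Let A be a commutative Banach algebra, I a dense ideal with A² + I = A, and let a₀ ∈ A∖I have a minimal-length representation a₀ = b₁c₁ + ⋯ + b_ncₙ + x with bᵢ, cᵢ ∈ A, x ∈ I. Then the ideal J = A♯a₀ + I is a proper ideal of A strictly containing I. -/

import Mathlib

/-- `M` is an ideal of the (non-unital) commutative algebra `A`. -/
def IsIdeal {A : Type*} [NonUnitalCommRing A] [Module ℂ A] (M : Submodule ℂ A) : Prop :=
  ∀ a : A, ∀ x ∈ M, a * x ∈ M

/-- `A²`: the linear span of all products `a * b`. -/
def sqIdeal (A : Type*) [NonUnitalCommRing A] [Module ℂ A] : Submodule ℂ A :=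
  Submodule.span ℂ {x : A | ∃ a b : A, x = a * b}

/-- The ideal `A♯ a₀ + I`, where `A♯ a₀ = ℂ a₀ + A a₀` is the ideal generated by `a₀`
in the unitization. -/
def genIdeal {A : Type*} [NonUnitalCommRing A] [Module ℂ A]
    (a₀ : A) (I : Submodule ℂ A) : Submodule ℂ A :=
  Submodule.span ℂ ({a₀} ∪ {y : A | ∃ x : A, y = x * a₀}) ⊔ I

lemma quasi_inv {A : Type*} [NonUnitalNormedCommRing A] [CompleteSpace A]
    (v : A) (hv : ‖v‖ < 1) : ∃ w : A, w = v + v * w := by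
  set p : ℕ → A := fun k => Nat.rec v (fun _ w => v * w) k with hp
  have hnorm : ∀ k, ‖p k‖ ≤ ‖v‖ * ‖v‖ ^ k := by
    intro k
    induction k with
    | zero => simp [hp]
    | succ k ih =>
      calc ‖p (k+1)‖ = ‖v * p k‖ := rfl
        _ ≤ ‖v‖ * ‖p k‖ := norm_mul_le _ _
        _ ≤ ‖v‖ * (‖v‖ * ‖v‖ ^ k) := by
            exact mul_le_mul_of_nonneg_left ih (norm_nonneg v)
        _ = ‖v‖ * ‖v‖ ^ (k+1) := by ring
  have hs : Summable p := by
    apply Summable.of_norm_bounded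
      ((summable_geometric_of_lt_one (norm_nonneg v) hv).mul_left ‖v‖) hnorm
  refine ⟨∑' k, p k, ?_⟩
  have h1 : ∑' k, p k = p 0 + ∑' k, p (k + 1) := Summable.tsum_eq_zero_add hs
  have h2 : ∑' k, p (k+1) = v * ∑' k, p k := by
    rw [← hs.tsum_mul_left v]
  rw [← h2]; exact h1

lemma genIdeal_mem {A : Type*} [NonUnitalNormedCommRing A] [NormedSpace ℂ A]
    [IsScalarTower ℂ A A] (a₀ : A) (I : Submodule ℂ A) {a : A}
    (ha : a ∈ genIdeal a₀ I) : ∃ (l : ℂ) (d : A), a - (l • a₀ + d * a₀) ∈ I := by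
  let S : Submodule ℂ A :=
  { carrier := {a | ∃ (l : ℂ) (d : A), a - (l • a₀ + d * a₀) ∈ I}
    zero_mem' := ⟨0, 0, by simp⟩
    add_mem' := by
      rintro a b ⟨l₁, d₁, h₁⟩ ⟨l₂, d₂, h₂⟩
      refine ⟨l₁ + l₂, d₁ + d₂, ?_⟩
      have h3 := I.add_mem h₁ h₂
      convert h3 using 1
      rw [add_smul, add_mul]; abel
    smul_mem' := by
      rintro k a ⟨l, d, h⟩
      refine ⟨k * l, k • d, ?_⟩
      have h3 := I.smul_mem k h
      convert h3 using 1
      rw [smul_sub, smul_add, mul_smul, smul_mul_assoc] }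
  suffices h : genIdeal a₀ I ≤ S from h ha
  unfold genIdeal
  apply sup_le
  · rw [Submodule.span_le]
    rintro y (hy | ⟨z, rfl⟩)
    · exact ⟨1, 0, by simp [Set.eq_of_mem_singleton hy]⟩
    · exact ⟨0, z, by simp⟩
  · intro y hy
    exact ⟨0, 0, by simpa using hy⟩

/-- Let `A` be a commutative Banach algebra, `I` a dense ideal with `A² + I = A`, and
`a₀ ∈ A ∖ I` having a representation `a₀ = b₁c₁ + ⋯ + bₙcₙ + x` (`x ∈ I`) with `n`
minimal among all elements of `A ∖ I` admitting such representations. Then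
`J = A♯a₀ + I` is a proper ideal of `A` strictly containing `I`. -/
theorem gen_ideal_proper
    {A : Type*} [NonUnitalNormedCommRing A] [NormedSpace ℂ A]
    [IsScalarTower ℂ A A] [SMulCommClass ℂ A A] [CompleteSpace A]
    (I : Submodule ℂ A) (hI : IsIdeal I) (hdense : Dense (I : Set A))
    (hsq : sqIdeal A ⊔ I = ⊤)
    (n : ℕ) (a₀ : A) (ha₀ : a₀ ∉ I)
    (b c : Fin n → A) (x : A) (hx : x ∈ I)
    (hrep : a₀ = (∑ i, b i * c i) + x)
    (hmin : ∀ (m : ℕ) (a : A), a ∉ I →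
      (∃ (b' c' : Fin m → A) (x' : A), x' ∈ I ∧ a = (∑ i, b' i * c' i) + x') → n ≤ m) :
    I < genIdeal a₀ I ∧ genIdeal a₀ I ≠ ⊤ := by
  have ha₀J : a₀ ∈ genIdeal a₀ I := by
    apply Submodule.mem_sup_left
    exact Submodule.subset_span (Set.mem_union_left _ rfl)
  constructor
  · refine lt_of_le_of_ne (le_sup_right : I ≤ genIdeal a₀ I) fun h => ha₀ ?_
    rw [h]; exact ha₀J
  · intro htop
    -- n ≥ 1
    have hn : n ≠ 0 := by
      rintro rfl
      apply ha₀
      rw [hrep]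
      simpa using hx
    obtain ⟨m, rfl⟩ := Nat.exists_eq_succ_of_ne_zero hn
    -- b 0 belongs to the (supposedly full) ideal
    have hb0 : b 0 ∈ genIdeal a₀ I := by rw [htop]; trivial
    obtain ⟨l, d, hbd⟩ := genIdeal_mem a₀ I hb0
    have h2base : a₀ = b 0 * c 0 + (∑ i : Fin m, b i.succ * c i.succ) + x := by
      rw [hrep, Fin.sum_univ_succ]
    set s := ∑ i : Fin m, b i.succ * c i.succ with hs_def
    set t := l • a₀ + d * a₀ with ht
    set u := l • c 0 + d * c 0 with hu_def
    set B := b 0 - t with hB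
    have key : u * a₀ = t * c 0 := by
      rw [hu_def, ht]
      simp only [add_mul, smul_mul_assoc, mul_assoc, mul_comm (c 0) a₀]
    have h2' : a₀ = B * c 0 + t * c 0 + s + x := by
      rw [hB, sub_mul, h2base]
      abel
    have hu : a₀ - u * a₀ - s ∈ I := by
      have heq : a₀ - u * a₀ - s = B * c 0 + x := by
        rw [key]
        conv_lhs => rw [h2']
        abel
      rw [heq]
      refine I.add_mem ?_ hx
      rw [mul_comm]
      exact hI (c 0) B hbd
    -- perturb u to v with ‖v‖ < 1 using density of I
    obtain ⟨j, hjI, hj⟩ := hdense.exists_dist_lt u one_pos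
    set v := u - j with hv_def
    have hvn : ‖v‖ < 1 := by rw [hv_def, ← dist_eq_norm]; exact hj
    obtain ⟨w, hw⟩ := quasi_inv v hvn
    set y := a₀ - v * a₀ - s with hy
    have hva : y ∈ I := by
      have h3 : y = (a₀ - u * a₀ - s) + j * a₀ := by
        rw [hy, hv_def, sub_mul]; abel
      rw [h3]
      exact I.add_mem hu (by rw [mul_comm]; exact hI a₀ j hjI)
    have e1 : a₀ - v * a₀ = s + y := by rw [hy]; abel
    have hvw' : v * w = w - v := by
      nth_rewrite 2 [hw]
      abel
    have e2 : w * (a₀ - v * a₀) = v * a₀ := by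
      rw [mul_sub, ← mul_assoc, mul_comm w v, hvw', sub_mul]
      abel
    have hvw : v * a₀ = w * s + w * y := by
      rw [← e2, e1, mul_add]
    have hfinal : a₀ = (s + w * s) + (y + w * y) := by
      calc a₀ = (a₀ - v * a₀) + v * a₀ := by abel
        _ = (s + y) + (w * s + w * y) := by rw [e1, hvw]
        _ = (s + w * s) + (y + w * y) := by abel
    have hsum : s + w * s = ∑ i : Fin m, (b i.succ + w * b i.succ) * c i.succ := by
      rw [hs_def, Finset.mul_sum, ← Finset.sum_add_distrib]
      refine Finset.sum_congr rfl fun i _ => ?_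
      rw [add_mul, mul_assoc]
    have hcontra := hmin m a₀ ha₀
      ⟨fun i => b i.succ + w * b i.succ, fun i => c i.succ, y + w * y,
        I.add_mem hva (hI w y hva), by rw [← hsum]; exact hfinal⟩
    omega
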